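/- arXiv:2211.03106 — 5 statements merged into one kernel-verified Lean document; each statement's English description precedes it below -/
import Mathlib

section
/- If positive reals v, v̂ solve the system (MR), then v̂ = √v · ((2+(1+θ)v)/(θ+1+2v))^(k/2). -/
/-- If positive reals `v, v̂` solve system (MR), then
`v̂ = √v · ((2+(1+θ)v)/(θ+1+2v))^(k/2)`. -/
theorem MR_implies_vhat_eq (k : ℕ) (hk : 2 ≤ k) (θ ζ η : ℝ)
    (hθ : 1 < θ) (hζ0 : 0 < ζ) (hζ1 : ζ < 1) (hη : 1 < η)
    (v vh : ℝ) (hv : 0 < v) (hvh : 0 < vh)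
    (h1 : v = ((ζ + 1 + 2 * vh) / (2 + (1 + η) * vh)) ^ 2 *
            ((2 + (1 + θ) * v) / (θ + 1 + 2 * v)) ^ (k - 2))
    (h2 : vh = ((ζ + 1 + 2 * vh) / (2 + (1 + η) * vh)) *
            ((2 + (1 + θ) * v) / (θ + 1 + 2 * v)) ^ (k - 1)) :
    vh = Real.sqrt v * ((2 + (1 + θ) * v) / (θ + 1 + 2 * v)) ^ ((k : ℝ) / 2) := by
  set A : ℝ := (ζ + 1 + 2 * vh) / (2 + (1 + η) * vh) with hA
  set B : ℝ := (2 + (1 + θ) * v) / (θ + 1 + 2 * v) with hB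
  have hBpos : 0 < B := div_pos (by nlinarith) (by nlinarith)
  have key : vh ^ 2 = v * B ^ k := by
    rw [h1, h2, mul_pow, ← pow_mul]
    have hkk : (k - 1) * 2 = (k - 2) + k := by omega
    rw [hkk, pow_add]; ring
  have hsq : Real.sqrt (B ^ k) = B ^ ((k : ℝ) / 2) := by
    rw [Real.sqrt_eq_rpow, ← Real.rpow_natCast B k, ← Real.rpow_mul hBpos.le]
    ring_nf
  calc vh = Real.sqrt (vh ^ 2) := (Real.sqrt_sq hvh.le).symm
    _ = Real.sqrt (v * B ^ k) := by rw [key]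
    _ = Real.sqrt v * Real.sqrt (B ^ k) := Real.sqrt_mul hv.le _
    _ = Real.sqrt v * B ^ ((k : ℝ) / 2) := by rw [hsq]
end

section
/- Conversely, if a positive real v satisfies v = f(v), where f(v) = [((ζ+1)(θ+1+2v)^(k/2) + 2√v·(2+(1+θ)v)^(k/2)) / (2(θ+1+2v)^(k/2) + (1+η)√v·(2+(1+θ)v)^(k/2))]² · ((2+(1+θ)v)/(θ+1+2v))^(k−2), and one defines v̂ = √v · ((2+(1+θ)v)/(θ+1+2v))^(k/2), then the pair (v, v̂) solves the system (MR). -/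
/-- Conversely: if a positive real `v` satisfies `v = f(v)` and one defines
`v̂ = √v · ((2+(1+θ)v)/(θ+1+2v))^(k/2)`, then `(v, v̂)` solves system (MR). -/
theorem fixed_point_f_implies_MR (k : ℕ) (hk : 2 ≤ k) (θ ζ η : ℝ)
    (hθ : 1 < θ) (hζ0 : 0 < ζ) (hζ1 : ζ < 1) (hη : 1 < η)
    (v : ℝ) (hv : 0 < v)
    (hf : v = (((ζ + 1) * (θ + 1 + 2 * v) ^ ((k : ℝ) / 2) +
            2 * Real.sqrt v * (2 + (1 + θ) * v) ^ ((k : ℝ) / 2)) /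
          (2 * (θ + 1 + 2 * v) ^ ((k : ℝ) / 2) +
            (1 + η) * Real.sqrt v * (2 + (1 + θ) * v) ^ ((k : ℝ) / 2))) ^ 2 *
        ((2 + (1 + θ) * v) / (θ + 1 + 2 * v)) ^ (k - 2))
    (vh : ℝ)
    (hvh : vh = Real.sqrt v * ((2 + (1 + θ) * v) / (θ + 1 + 2 * v)) ^ ((k : ℝ) / 2)) :
    v = ((ζ + 1 + 2 * vh) / (2 + (1 + η) * vh)) ^ 2 *
          ((2 + (1 + θ) * v) / (θ + 1 + 2 * v)) ^ (k - 2) ∧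
    vh = ((ζ + 1 + 2 * vh) / (2 + (1 + η) * vh)) *
          ((2 + (1 + θ) * v) / (θ + 1 + 2 * v)) ^ (k - 1) := by
  have hA : (0:ℝ) < θ + 1 + 2 * v := by nlinarith
  have hB : (0:ℝ) < 2 + (1 + θ) * v := by nlinarith
  set a := (θ + 1 + 2 * v) ^ ((k : ℝ) / 2) with ha_def
  set b := (2 + (1 + θ) * v) ^ ((k : ℝ) / 2) with hb_def
  have ha : 0 < a := Real.rpow_pos_of_pos hA _
  have hb : 0 < b := Real.rpow_pos_of_pos hB _
  have hs : 0 < Real.sqrt v := Real.sqrt_pos.mpr hv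
  set s := Real.sqrt v with hs_def
  set Q := ((ζ + 1) * a + 2 * s * b) / (2 * a + (1 + η) * s * b) with hQ_def
  have hQ : 0 < Q := by positivity
  set x := (2 + (1 + θ) * v) / (θ + 1 + 2 * v) with hx_def
  have hx : 0 < x := div_pos hB hA
  have hxk : x ^ ((k : ℝ) / 2) = b / a := by
    rw [hx_def, ha_def, hb_def, Real.div_rpow hB.le hA.le]
  have key : (ζ + 1 + 2 * vh) / (2 + (1 + η) * vh) = Q := by
    rw [hvh, hxk, hQ_def]
    field_simp
  refine ⟨by rw [key]; exact hf, ?_⟩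
  rw [key]
  have hc2 : ((k - 2 : ℕ) : ℝ) = (k : ℝ) - 2 := by
    push_cast [Nat.cast_sub hk]; ring
  have hc1 : ((k - 1 : ℕ) : ℝ) = (k : ℝ) - 1 := by
    have : 1 ≤ k := le_trans (by norm_num) hk
    push_cast [Nat.cast_sub this]; ring
  have hsv : s = Q * x ^ (((k : ℝ) - 2) / 2) := by
    rw [hs_def, hf]
    rw [show x ^ (k - 2) = x ^ (((k - 2 : ℕ) : ℝ)) from (Real.rpow_natCast x (k-2)).symm]
    rw [Real.sqrt_mul (by positivity) , Real.sqrt_sq hQ.le,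
      Real.sqrt_eq_rpow, ← Real.rpow_mul hx.le, hc2]
    ring_nf
  rw [hvh, hsv, mul_assoc, ← Real.rpow_add hx,
    show ((k : ℝ) - 2) / 2 + (k : ℝ) / 2 = ((k - 1 : ℕ) : ℝ) by rw [hc1]; ring,
    Real.rpow_natCast]
end

section
/- Every fixed point (u, v, w) ∈ (0,∞)³ of G satisfies u = 1 and v = w; that is, Fix(G) ⊆ L where L = {(u, v, w) ∈ (0,∞)³ : u = 1, v = w}. -/
/-- The operator `G` of the BCC-DNA model (q = 2), acting on triples `(u, v, w)`. -/
noncomputable def Gop (k : ℕ) (ζ η : ℝ) (p : ℝ × ℝ × ℝ) : ℝ × ℝ × ℝ :=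
  let u := p.1; let v := p.2.1; let w := p.2.2
  ( ((1 + u + v + η * w) / (1 + u + η * v + w)) ^ k,
    ((ζ + u + v + w) / (1 + u + η * v + w)) ^ k,
    ((1 + ζ * u + v + w) / (1 + u + η * v + w)) ^ k )

/-- Every fixed point of `G` in `(0,∞)³` satisfies `u = 1` and `v = w`,
i.e. `Fix(G) ⊆ L`. -/
theorem fix_G_subset_L (k : ℕ) (hk : 1 ≤ k) (ζ η : ℝ)
    (hζ0 : 0 < ζ) (hζ1 : ζ < 1) (hη : 1 < η)
    (u v w : ℝ) (hu : 0 < u) (hv : 0 < v) (hw : 0 < w)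
    (hfix : Gop k ζ η (u, v, w) = (u, v, w)) :
    u = 1 ∧ v = w := by
  have hD : 0 < 1 + u + η * v + w := by nlinarith
  have hk0 : k ≠ 0 := by omega
  obtain ⟨e1, e2, e3⟩ : ((1 + u + v + η * w) / (1 + u + η * v + w)) ^ k = u ∧
      ((ζ + u + v + w) / (1 + u + η * v + w)) ^ k = v ∧
      ((1 + ζ * u + v + w) / (1 + u + η * v + w)) ^ k = w := by
    simpa [Gop, Prod.ext_iff] using hfix
  have hvw : v = w := by
    rcases lt_trichotomy v w with h | h | h
    · exfalso
      have hA : 1 + u + η * v + w < 1 + u + v + η * w := by nlinarith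
      have h1 : 1 < (1 + u + v + η * w) / (1 + u + η * v + w) := (one_lt_div hD).mpr hA
      have hu1 : 1 < u := e1 ▸ one_lt_pow₀ h1 hk0
      have hB : (1 + ζ * u + v + w) / (1 + u + η * v + w) <
          (ζ + u + v + w) / (1 + u + η * v + w) := by
        exact (div_lt_div_iff_of_pos_right hD).mpr (by nlinarith)
      have h2 := pow_lt_pow_left₀ hB (by positivity) hk0
      rw [e2, e3] at h2
      linarith
    · exact h
    · exfalso
      have hA : 1 + u + v + η * w < 1 + u + η * v + w := by nlinarith
      have h1 : (1 + u + v + η * w) / (1 + u + η * v + w) < 1 := (div_lt_one hD).mpr hA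
      have hu1 : u < 1 := e1 ▸ pow_lt_one₀ (by positivity) h1 hk0
      have hB : (ζ + u + v + w) / (1 + u + η * v + w) <
          (1 + ζ * u + v + w) / (1 + u + η * v + w) := by
        exact (div_lt_div_iff_of_pos_right hD).mpr (by nlinarith)
      have h2 := pow_lt_pow_left₀ hB (by positivity) hk0
      rw [e2, e3] at h2
      linarith
  refine ⟨?_, hvw⟩
  have : (1 + u + v + η * w) / (1 + u + η * v + w) = 1 := by
    rw [div_eq_one_iff_eq (ne_of_gt hD)]
    rw [hvw]; ring
  rw [← e1, this, one_pow]
end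

section
/- For any integer k ≥ 1 and real parameters ζ ∈ (0,1), η > 1, the equation v = ((ζ+1+2v)/(2+(1+η)v))^k has exactly one positive real solution v. -/
private lemma aux_pow_ineq (x : ℝ) (hx : 0 ≤ x) :
    ∀ m : ℕ, ((m : ℝ) + 1) * x ^ m ≤ 1 + (m : ℝ) * x ^ (m + 1) := by
  intro m
  induction m with
  | zero => simp
  | succ m ih =>
    have h1 : 0 ≤ (1 - x) * (1 - x ^ (m + 1)) := by
      rcases le_total x 1 with h | h
      · have hx1 : x ^ (m + 1) ≤ 1 := pow_le_one₀ hx h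
        nlinarith
      · have hx1 : 1 ≤ x ^ (m + 1) := one_le_pow₀ h
        nlinarith
    have h2 : ((m : ℝ) + 1) * x ^ m * x ≤ (1 + (m : ℝ) * x ^ (m + 1)) * x :=
      mul_le_mul_of_nonneg_right ih hx
    push_cast
    nlinarith [pow_succ x m, pow_succ x (m + 1)]

/-- For any integer `k ≥ 1`, `ζ ∈ (0,1)`, `η > 1`, the equation
`v = ((ζ+1+2v)/(2+(1+η)v))^k` has exactly one positive real solution. -/
theorem unique_positive_solution (k : ℕ) (hk : 1 ≤ k) (ζ η : ℝ)
    (hζ0 : 0 < ζ) (hζ1 : ζ < 1) (hη : 1 < η) :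
    ∃! v : ℝ, 0 < v ∧ v = ((ζ + 1 + 2 * v) / (2 + (1 + η) * v)) ^ k := by
  set G : ℝ → ℝ := fun t => 2 * t + (1 + η) * t ^ (k + 1) - 2 * t ^ k with hGdef
  have hkne : k ≠ 0 := by omega
  -- derivative of G
  have hderiv : ∀ t : ℝ,
      HasDerivAt G (2 + (1 + η) * (((k : ℝ) + 1) * t ^ k) - 2 * ((k : ℝ) * t ^ (k - 1))) t := by
    intro t
    have h1 : HasDerivAt (fun t : ℝ => t ^ (k + 1)) (((k : ℝ) + 1) * t ^ k) t := by
      have := hasDerivAt_pow (k + 1) t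
      simpa using this
    have h2 : HasDerivAt (fun t : ℝ => t ^ k) ((k : ℝ) * t ^ (k - 1)) t := hasDerivAt_pow k t
    have h3 := (((hasDerivAt_id t).const_mul 2).add (h1.const_mul (1 + η))).sub
      (h2.const_mul 2)
    simpa [hGdef, mul_comm, Pi.add_def, Pi.sub_def] using h3
  -- G is strictly monotone on [0, ∞)
  have hGcont : Continuous G := by fun_prop
  have hmono : StrictMonoOn G (Set.Ici 0) := by
    apply strictMonoOn_of_deriv_pos (convex_Ici 0) hGcont.continuousOn
    intro t ht
    rw [interior_Ici] at ht
    rw [(hderiv t).deriv]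
    obtain ⟨m, rfl⟩ : ∃ m, k = m + 1 := ⟨k - 1, by omega⟩
    have key := aux_pow_ineq t ht.le m
    have htp : 0 < t ^ (m + 1) := pow_pos ht (m + 1)
    have h2 : (2 : ℝ) ≤ 1 + η := by linarith
    have h3 : 2 * (((m : ℝ) + 1 + 1) * t ^ (m + 1)) ≤ (1 + η) * (((m : ℝ) + 1 + 1) * t ^ (m + 1)) := by
      apply mul_le_mul_of_nonneg_right h2
      positivity
    simp only [Nat.add_sub_cancel]
    push_cast
    nlinarith [key, htp, h3]
  -- existence of a root of G t = ζ + 1 on [0, ζ+1]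
  have hG0 : G 0 = 0 := by simp [hGdef, zero_pow hkne]
  have hGtop : ζ + 1 ≤ G (ζ + 1) := by
    have ha : (1 : ℝ) ≤ ζ + 1 := by linarith
    have hpow : (0 : ℝ) ≤ (ζ + 1) ^ k := by positivity
    have hprod : 0 ≤ (ζ + 1) ^ k * ((1 + η) * (ζ + 1) - 2) := by
      apply mul_nonneg hpow
      nlinarith
    have hps : (ζ + 1) ^ (k + 1) = (ζ + 1) ^ k * (ζ + 1) := pow_succ _ _
    simp only [hGdef]
    nlinarith
  obtain ⟨t₀, ht₀mem, ht₀eq⟩ : ∃ t₀ ∈ Set.Icc (0 : ℝ) (ζ + 1), G t₀ = ζ + 1 := by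
    have h01 : (0 : ℝ) ≤ ζ + 1 := by linarith
    have := intermediate_value_Icc h01 hGcont.continuousOn
    have hmem : ζ + 1 ∈ Set.Icc (G 0) (G (ζ + 1)) := by
      rw [hG0]; exact ⟨by linarith, hGtop⟩
    obtain ⟨t₀, ht₀, heq⟩ := this hmem
    exact ⟨t₀, ht₀, heq⟩
  have ht₀pos : 0 < t₀ := by
    rcases lt_or_eq_of_le ht₀mem.1 with h | h
    · exact h
    · exfalso; rw [← h, hG0] at ht₀eq; linarith
  -- the key correspondence: for any positive solution v, its s-value satisfies G s = ζ + 1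
  have hkey : ∀ v : ℝ, 0 < v → v = ((ζ + 1 + 2 * v) / (2 + (1 + η) * v)) ^ k →
      ∃ s : ℝ, 0 < s ∧ v = s ^ k ∧ G s = ζ + 1 := by
    intro v hv hveq
    set s := (ζ + 1 + 2 * v) / (2 + (1 + η) * v) with hsdef
    have hden : (0 : ℝ) < 2 + (1 + η) * v := by nlinarith
    have hnum : (0 : ℝ) < ζ + 1 + 2 * v := by linarith
    have hs : 0 < s := div_pos hnum hden
    refine ⟨s, hs, hveq, ?_⟩
    have hmul : s * (2 + (1 + η) * v) = ζ + 1 + 2 * v := by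
      rw [hsdef, div_mul_cancel₀ _ (ne_of_gt hden)]
    have hps : s ^ (k + 1) = s ^ k * s := pow_succ _ _
    have hvs : v = s ^ k := hveq
    simp only [hGdef]
    rw [hps, ← hvs]
    nlinarith [hmul]
  -- conversely, t₀ gives a solution
  have hden₀ : (0 : ℝ) < 2 + (1 + η) * t₀ ^ k := by
    have : (0 : ℝ) < t₀ ^ k := pow_pos ht₀pos k
    nlinarith
  have hsol : t₀ ^ k = ((ζ + 1 + 2 * t₀ ^ k) / (2 + (1 + η) * t₀ ^ k)) ^ k := by
    have hmul : t₀ * (2 + (1 + η) * t₀ ^ k) = ζ + 1 + 2 * t₀ ^ k := by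
      have hps : t₀ ^ (k + 1) = t₀ ^ k * t₀ := pow_succ _ _
      have := ht₀eq
      simp only [hGdef] at this
      nlinarith [this]
    have hst : (ζ + 1 + 2 * t₀ ^ k) / (2 + (1 + η) * t₀ ^ k) = t₀ := by
      rw [eq_comm, eq_div_iff (ne_of_gt hden₀)]
      linarith [hmul]
    rw [hst]
  refine ⟨t₀ ^ k, ⟨pow_pos ht₀pos k, hsol⟩, ?_⟩
  rintro w ⟨hw, hweq⟩
  obtain ⟨s, hs, hws, hGs⟩ := hkey w hw hweq
  have hst : s = t₀ := hmono.injOn (Set.mem_Ici.mpr hs.le) (Set.mem_Ici.mpr ht₀pos.le)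
    (by rw [hGs, ht₀eq])
  rw [hws, hst]
end

section
/- For any integer k ≥ 1 and real parameters ζ ∈ (0,1), η > 1, the operator G has exactly one fixed point in (0,∞)³, namely (1, v*, v*) where v* is the unique positive solution of v = ((ζ+1+2v)/(2+(1+η)v))^k. -/
/-- AM-GM type inequality: `(k+1) x^k ≤ k x^(k+1) + 1` for `x ≥ 0`. -/
lemma amgm_aux (k : ℕ) (x : ℝ) (hx : 0 ≤ x) :
    (k + 1 : ℝ) * x ^ k ≤ (k : ℝ) * x ^ (k + 1) + 1 := by
  induction k with
  | zero => simp
  | succ n ih =>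
    have h1 : 0 ≤ (x - 1) * (x ^ (n + 1) - 1) := by
      rcases le_total x 1 with h | h
      · have h2 : x ^ (n + 1) ≤ 1 := pow_le_one₀ hx h
        nlinarith
      · have h2 : 1 ≤ x ^ (n + 1) := one_le_pow₀ h
        nlinarith
    have h2 := mul_le_mul_of_nonneg_left ih hx
    push_cast
    nlinarith [pow_succ x n, pow_succ x (n + 1), pow_nonneg hx n, pow_nonneg hx (n + 1)]

lemma P_strictMono (k : ℕ) (hk : 1 ≤ k) (η : ℝ) (hη : 1 < η) :
    StrictMonoOn (fun x : ℝ => 2 * x + (1 + η) * x ^ (k + 1) - 2 * x ^ k) (Set.Ici 0) := by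
  apply strictMonoOn_of_deriv_pos (convex_Ici 0)
  · fun_prop
  · intro x hx
    rw [interior_Ici, Set.mem_Ioi] at hx
    have h1 : HasDerivAt (fun x : ℝ => 2 * x) 2 x := by
      simpa using (hasDerivAt_id x).const_mul 2
    have h2 : HasDerivAt (fun x : ℝ => (1 + η) * x ^ (k + 1))
        ((1 + η) * ((k + 1 : ℕ) * x ^ k)) x := by
      simpa using (hasDerivAt_pow (k + 1) x).const_mul (1 + η)
    have h3 : HasDerivAt (fun x : ℝ => 2 * x ^ k) (2 * ((k : ℕ) * x ^ (k - 1))) x :=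
      (hasDerivAt_pow k x).const_mul 2
    have hd : HasDerivAt (fun x : ℝ => 2 * x + (1 + η) * x ^ (k + 1) - 2 * x ^ k) _ x :=
      (h1.add h2).sub h3
    rw [hd.deriv]
    obtain ⟨m, rfl⟩ : ∃ m, k = m + 1 := ⟨k - 1, by omega⟩
    have ha := amgm_aux m x hx.le
    have hb : 0 < (η - 1) * x ^ (m + 1) := mul_pos (by linarith) (pow_pos hx (m + 1))
    have hc : 0 ≤ (m : ℝ) * ((η - 1) * x ^ (m + 1)) :=
      mul_nonneg (Nat.cast_nonneg m) hb.le
    have hsub : m + 1 - 1 = m := by omega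
    rw [hsub]
    push_cast
    nlinarith [pow_pos hx (m + 1)]

/-- Existence and uniqueness of the positive root of `P x = ζ + 1`. -/
lemma P_root (k : ℕ) (hk : 1 ≤ k) (ζ η : ℝ) (hζ0 : 0 < ζ) (hζ1 : ζ < 1) (hη : 1 < η) :
    ∃ x : ℝ, 0 < x ∧ 2 * x + (1 + η) * x ^ (k + 1) - 2 * x ^ k = ζ + 1 ∧
      ∀ y : ℝ, 0 ≤ y → 2 * y + (1 + η) * y ^ (k + 1) - 2 * y ^ k = ζ + 1 → y = x := by
  have hk0 : k ≠ 0 := by omega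
  set P : ℝ → ℝ := fun x => 2 * x + (1 + η) * x ^ (k + 1) - 2 * x ^ k with hPdef
  have hmono := P_strictMono k hk η hη
  have hP0 : P 0 = 0 := by simp [hPdef, zero_pow hk0]
  have hP1 : P 1 = 1 + η := by simp [hPdef]
  have hcont : ContinuousOn P (Set.Icc 0 1) := by fun_prop
  have hc : ζ + 1 ∈ Set.Icc (P 0) (P 1) := by
    rw [hP0, hP1]; constructor <;> [linarith; linarith]
  obtain ⟨x, hxmem, hPx⟩ := intermediate_value_Icc (by norm_num : (0:ℝ) ≤ 1) hcont hc
  have hx0 : 0 < x := by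
    rcases eq_or_lt_of_le hxmem.1 with h | h
    · exfalso; rw [← h, hP0] at hPx; linarith
    · exact h
  refine ⟨x, hx0, hPx, ?_⟩
  intro y hy hPy
  exact hmono.injOn (Set.mem_Ici.mpr hy) (Set.mem_Ici.mpr hxmem.1)
    (show P y = P x by simp only [hPdef] at hPx ⊢; rw [hPy, hPx])

/-- `G` has exactly one fixed point in `(0,∞)³`, namely `(1, v*, v*)` where `v*`
is the unique positive solution of `v = ((ζ+1+2v)/(2+(1+η)v))^k`. -/
theorem unique_fixed_point_G (k : ℕ) (hk : 1 ≤ k) (ζ η : ℝ)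
    (hζ0 : 0 < ζ) (hζ1 : ζ < 1) (hη : 1 < η) :
    ∃ v : ℝ, (0 < v ∧ v = ((ζ + 1 + 2 * v) / (2 + (1 + η) * v)) ^ k) ∧
      (∀ v' : ℝ, 0 < v' → v' = ((ζ + 1 + 2 * v') / (2 + (1 + η) * v')) ^ k →
        v' = v) ∧
      ∀ p : ℝ × ℝ × ℝ, (0 < p.1 ∧ 0 < p.2.1 ∧ 0 < p.2.2) →
        (Gop k ζ η p = p ↔ p = (1, v, v)) := by
  have hk0 : k ≠ 0 := by omega
  obtain ⟨x, hx0, hPx, hPuniq⟩ := P_root k hk ζ η hζ0 hζ1 hη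
  obtain ⟨v, hvdef⟩ : ∃ v : ℝ, v = x ^ k := ⟨x ^ k, rfl⟩
  have hv0 : 0 < v := hvdef ▸ pow_pos hx0 k
  have hden : 0 < 2 + (1 + η) * v := by nlinarith
  have hxeq : x = (ζ + 1 + 2 * v) / (2 + (1 + η) * v) := by
    rw [eq_div_iff (ne_of_gt hden)]
    have hxk1 : x ^ (k + 1) = v * x := by rw [pow_succ, hvdef]
    rw [hxk1, ← hvdef] at hPx
    linear_combination hPx
  have hvfix : v = ((ζ + 1 + 2 * v) / (2 + (1 + η) * v)) ^ k := by rw [← hxeq, hvdef]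
  have huniq : ∀ v' : ℝ, 0 < v' → v' = ((ζ + 1 + 2 * v') / (2 + (1 + η) * v')) ^ k →
      v' = v := by
    intro v' hv' hfix
    obtain ⟨x', hx'def⟩ : ∃ t : ℝ, t = (ζ + 1 + 2 * v') / (2 + (1 + η) * v') := ⟨_, rfl⟩
    rw [← hx'def] at hfix
    have hden' : 0 < 2 + (1 + η) * v' := by nlinarith
    have hx'0 : 0 < x' := hx'def ▸ div_pos (by linarith) hden'
    have hmul : x' * (2 + (1 + η) * v') = ζ + 1 + 2 * v' := by
      rw [hx'def]; field_simp
    have hPx' : 2 * x' + (1 + η) * x' ^ (k + 1) - 2 * x' ^ k = ζ + 1 := by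
      have hxk1 : x' ^ (k + 1) = x' * v' := by rw [pow_succ, hfix]; ring
      rw [hxk1, ← hfix]
      linear_combination hmul
    have hxx : x' = x := hPuniq x' hx'0.le hPx'
    rw [hfix, hvdef, hxx]
  refine ⟨v, ⟨hv0, hvfix⟩, huniq, ?_⟩
  rintro ⟨u, vv, w⟩ ⟨hu, hvv, hw⟩
  simp only at hu hvv hw
  have hηvv : 0 < η * vv := mul_pos (by linarith) hvv
  have hηw : 0 < η * w := mul_pos (by linarith) hw
  have hD : 0 < 1 + u + η * vv + w := by linarith
  constructor
  · intro hfix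
    simp only [Gop, Prod.mk.injEq] at hfix
    obtain ⟨h1, h2, h3⟩ := hfix
    have hN2 : 0 < ζ + u + vv + w := by linarith
    have hN3 : 0 < 1 + ζ * u + vv + w := by nlinarith
    have hu1 : u = 1 := by
      rcases lt_trichotomy u 1 with h | h | h
      · -- u < 1 : N2 < N3, so vv < w, so N1 > D, so u > 1, contradiction
        have hlt : ζ + u + vv + w < 1 + ζ * u + vv + w := by nlinarith
        have hvw : vv < w := by
          have hp := pow_lt_pow_left₀ (div_lt_div_of_pos_right hlt hD) (by positivity) hk0
          rwa [h2, h3] at hp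
        have hgt : 1 < (1 + u + vv + η * w) / (1 + u + η * vv + w) :=
          (one_lt_div hD).mpr (by nlinarith [mul_pos (sub_pos.mpr hη) (sub_pos.mpr hvw)])
        have : 1 < u := by rw [← h1]; exact one_lt_pow₀ hgt hk0
        linarith
      · exact h
      · -- u > 1 : N3 < N2, so w < vv, so N1 < D, so u < 1, contradiction
        have hlt : 1 + ζ * u + vv + w < ζ + u + vv + w := by nlinarith
        have hvw : w < vv := by
          have hp := pow_lt_pow_left₀ (div_lt_div_of_pos_right hlt hD) (by positivity) hk0
          rwa [h2, h3] at hp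
        have hlt1 : (1 + u + vv + η * w) / (1 + u + η * vv + w) < 1 :=
          (div_lt_one hD).mpr (by nlinarith [mul_pos (sub_pos.mpr hη) (sub_pos.mpr hvw)])
        have : u < 1 := by rw [← h1]; exact pow_lt_one₀ (by positivity) hlt1 hk0
        linarith
    subst hu1
    rw [show (1:ℝ) + ζ * 1 + vv + w = ζ + 1 + vv + w from by ring] at h3
    have hvw : vv = w := h2.symm.trans h3
    subst hvw
    have h2' : ((ζ + 1 + 2 * vv) / (2 + (1 + η) * vv)) ^ k = vv := by
      rw [show (ζ + 1 + 2 * vv) / (2 + (1 + η) * vv)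
          = (ζ + 1 + vv + vv) / (1 + 1 + η * vv + vv) from by ring]
      exact h2
    have hvvv : vv = v := huniq vv hvv h2'.symm
    rw [hvvv]
  · intro hp
    rw [hp]
    have hD' : (0:ℝ) < 1 + 1 + η * v + v := by linarith
    simp only [Gop, Prod.mk.injEq]
    refine ⟨?_, ?_, ?_⟩
    · rw [show (1:ℝ) + 1 + v + η * v = 1 + 1 + η * v + v from by ring,
        div_self (ne_of_gt hD'), one_pow]
    · rw [show (ζ + 1 + v + v) / (1 + 1 + η * v + v)
          = (ζ + 1 + 2 * v) / (2 + (1 + η) * v) from by ring, ← hvfix]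
    · rw [show (1 + ζ * 1 + v + v) / (1 + 1 + η * v + v)
          = (ζ + 1 + 2 * v) / (2 + (1 + η) * v) from by ring, ← hvfix]
end
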